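/- The map G ↦ G(∞) is a bijection from the set of words of the form W·P (where W is any word in the monoid generated by P and M) to the positive rational numbers, and its restriction to words of the form P·W·P is a bijection onto the rationals greater than 1. -/
import Mathlib

/-- The matrix of the Möbius transformation `P : x ↦ 1 + 1/x`. -/
def Pm : Matrix (Fin 2) (Fin 2) ℤ := !![1, 1; 1, 0]

/-- The matrix of the Möbius transformation `M : x ↦ 1/(1+x)`. -/
def Mm : Matrix (Fin 2) (Fin 2) ℤ := !![0, 1; 1, 1]

/-- A letter of a word in the monoid generated by `P` and `M`. -/
def toMat (b : Bool) : Matrix (Fin 2) (Fin 2) ℤ := if b then Pm else Mm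

/-- The product of a word in `P` and `M`. -/
def wordProd (w : List Bool) : Matrix (Fin 2) (Fin 2) ℤ := (w.map toMat).prod

/-- The image `G(∞)` of the point at infinity under the fractional linear
transformation with matrix `A`, namely `A₀₀ / A₁₀`. -/
def mobInf (A : Matrix (Fin 2) (Fin 2) ℤ) : ℚ := (A 0 0 : ℚ) / (A 1 0)

namespace SBaux

/-- The Stern–Brocot pair of a word. -/
def g : List Bool → ℕ × ℕ
  | [] => (1, 1)
  | true :: w => ((g w).1 + (g w).2, (g w).1)
  | false :: w => ((g w).2, (g w).1 + (g w).2)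

lemma g_pos : ∀ w : List Bool, 0 < (g w).1 ∧ 0 < (g w).2
  | [] => by simp [g]
  | true :: w => by have := g_pos w; simp only [g]; omega
  | false :: w => by have := g_pos w; simp only [g]; omega

lemma g_coprime : ∀ w : List Bool, Nat.Coprime (g w).1 (g w).2
  | [] => by simp [g]
  | true :: w => by
      have h := g_coprime w
      simp only [g]
      rw [Nat.add_comm]
      exact Nat.coprime_add_self_left.mpr h.symm
  | false :: w => by
      have h := g_coprime w
      simp only [g]
      exact Nat.coprime_add_self_right.mpr h.symm

lemma g_inj : ∀ w w' : List Bool, g w = g w' → w = w'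
  | [], [], _ => rfl
  | [], true :: t, h => by
      have := g_pos t; rw [Prod.ext_iff] at h; simp only [g] at h; omega
  | [], false :: t, h => by
      have := g_pos t; rw [Prod.ext_iff] at h; simp only [g] at h; omega
  | true :: t, [], h => by
      have := g_pos t; rw [Prod.ext_iff] at h; simp only [g] at h; omega
  | false :: t, [], h => by
      have := g_pos t; rw [Prod.ext_iff] at h; simp only [g] at h; omega
  | true :: t, false :: t', h => by
      have := g_pos t; have := g_pos t'
      rw [Prod.ext_iff] at h; simp only [g] at h; omega
  | false :: t, true :: t', h => by
      have := g_pos t; have := g_pos t'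
      rw [Prod.ext_iff] at h; simp only [g] at h; omega
  | true :: t, true :: t', h => by
      rw [Prod.ext_iff] at h; simp only [g] at h
      have ht : g t = g t' := by rw [Prod.ext_iff]; omega
      rw [g_inj t t' ht]
  | false :: t, false :: t', h => by
      rw [Prod.ext_iff] at h; simp only [g] at h
      have ht : g t = g t' := by rw [Prod.ext_iff]; omega
      rw [g_inj t t' ht]

lemma g_surj : ∀ n x y : ℕ, x + y = n → 0 < x → 0 < y → Nat.Coprime x y →
    ∃ w, g w = (x, y) := by
  intro n
  induction n using Nat.strong_induction_on with
  | _ n ih =>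
    intro x y hn hx hy hc
    rcases lt_trichotomy x y with h | h | h
    · -- use false :: t with g t = (y - x, x)
      have hc' : Nat.Coprime (y - x) x := by
        have h2 : Nat.Coprime x (y - x) := by
          have he : (y - x) + x = y := by omega
          exact Nat.coprime_add_self_right.mp (by rw [he]; exact hc)
        exact h2.symm
      obtain ⟨t, ht⟩ := ih ((y - x) + x) (by omega) (y - x) x rfl (by omega) hx hc'
      refine ⟨false :: t, ?_⟩
      simp only [g, ht]
      exact Prod.ext rfl (by omega)
    · have hx1 : x = 1 := by
        have hg : Nat.gcd x y = 1 := hc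
        rw [← h] at hg
        simpa using hg
      refine ⟨[], ?_⟩
      simp only [g]
      exact Prod.ext (by omega) (by omega)
    · -- use true :: t with g t = (y, x - y)
      have hc' : Nat.Coprime y (x - y) := by
        have he : (x - y) + y = x := by omega
        have h2 : Nat.Coprime y ((x - y) + y) := by rw [he]; exact hc.symm
        exact Nat.coprime_add_self_right.mp h2
      obtain ⟨t, ht⟩ := ih (y + (x - y)) (by omega) y (x - y) rfl hy (by omega) hc'
      refine ⟨true :: t, ?_⟩
      simp only [g, ht]
      exact Prod.ext (by omega) rfl

lemma entries : ∀ w : List Bool,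
    (wordProd w * Pm) 0 0 = ((g w).1 : ℤ) ∧ (wordProd w * Pm) 1 0 = ((g w).2 : ℤ)
  | [] => by
      simp [wordProd, g, Pm]
  | b :: w => by
      have ih := entries w
      have hw : wordProd (b :: w) * Pm = toMat b * (wordProd w * Pm) := by
        simp [wordProd, Matrix.mul_assoc]
      rw [hw]
      generalize hB : wordProd w * Pm = B at ih ⊢
      obtain ⟨ih1, ih2⟩ := ih
      cases b <;>
        simp only [toMat, if_true, if_false, Bool.false_eq_true, Pm, Mm, g,
          Matrix.mul_apply, Fin.sum_univ_two, Matrix.cons_val', Matrix.cons_val_zero,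
          Matrix.cons_val_one, Matrix.head_cons, Matrix.empty_val',
          Matrix.cons_val_fin_one, Matrix.head_fin_const, ih1, ih2] <;>
        norm_num <;> push_cast <;> omega

lemma frac_inj {a b c d : ℕ} (ha : 0 < a) (hb : 0 < b) (hc : 0 < c) (hd : 0 < d)
    (hab : Nat.Coprime a b) (hcd : Nat.Coprime c d)
    (h : (a : ℚ) / b = (c : ℚ) / d) : a = c ∧ b = d := by
  have hb' : (b : ℚ) ≠ 0 := by positivity
  have hd' : (d : ℚ) ≠ 0 := by positivity
  have h' : (a : ℚ) * d = c * b := by field_simp at h; linarith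
  have hn : a * d = c * b := by exact_mod_cast h'
  have h1 : a ∣ c := hab.dvd_of_dvd_mul_right ⟨d, by rw [hn, mul_comm]⟩
  have h2 : c ∣ a := hcd.dvd_of_dvd_mul_right ⟨b, by rw [← hn, mul_comm]⟩
  have hac : a = c := Nat.dvd_antisymm h1 h2
  refine ⟨hac, ?_⟩
  subst hac
  exact (Nat.eq_of_mul_eq_mul_left ha (by omega)).symm

lemma val_eq (w : List Bool) :
    mobInf (wordProd w * Pm) = ((g w).1 : ℚ) / ((g w).2 : ℚ) := by
  rw [mobInf, (entries w).1, (entries w).2]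
  push_cast
  ring

lemma entries2 (w : List Bool) :
    (Pm * wordProd w * Pm) 0 0 = ((g w).1 + (g w).2 : ℤ) ∧
      (Pm * wordProd w * Pm) 1 0 = ((g w).1 : ℤ) := by
  have ih := entries w
  rw [Matrix.mul_assoc]
  generalize hB : wordProd w * Pm = B at ih ⊢
  obtain ⟨ih1, ih2⟩ := ih
  constructor <;>
    simp only [Pm, Matrix.mul_apply, Fin.sum_univ_two, Matrix.cons_val',
      Matrix.cons_val_zero, Matrix.cons_val_one, Matrix.head_cons, Matrix.empty_val',
      Matrix.cons_val_fin_one, Matrix.head_fin_const, ih1, ih2] <;>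
    norm_num <;> push_cast <;> omega

lemma val2_eq (w : List Bool) :
    mobInf (Pm * wordProd w * Pm) = (((g w).1 + (g w).2 : ℕ) : ℚ) / ((g w).1 : ℚ) := by
  rw [mobInf, (entries2 w).1, (entries2 w).2]
  push_cast
  ring

end SBaux

open SBaux in
theorem mobInf_bijections :
    (Function.Injective (fun w : List Bool => mobInf (wordProd w * Pm)) ∧
      Set.range (fun w : List Bool => mobInf (wordProd w * Pm)) = {q : ℚ | 0 < q}) ∧
    (Function.Injective (fun w : List Bool => mobInf (Pm * wordProd w * Pm)) ∧
      Set.range (fun w : List Bool => mobInf (Pm * wordProd w * Pm)) = {q : ℚ | 1 < q}) := by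
  constructor
  · constructor
    · intro w w' h
      simp only [val_eq] at h
      obtain ⟨h1, h2⟩ := frac_inj (g_pos w).1 (g_pos w).2 (g_pos w').1 (g_pos w').2
        (g_coprime w) (g_coprime w') h
      exact g_inj w w' (Prod.ext h1 h2)
    · ext q
      simp only [Set.mem_range, Set.mem_setOf_eq]
      constructor
      · rintro ⟨w, rfl⟩
        rw [val_eq]
        have h1 := (g_pos w).1
        have h2 := (g_pos w).2
        positivity
      · intro hq
        have hnum : 0 < q.num := Rat.num_pos.mpr hq
        obtain ⟨w, hw⟩ := g_surj (q.num.toNat + q.den) q.num.toNat q.den rfl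
          (by omega) q.pos (by
            have hr := q.reduced
            have he : q.num.toNat = q.num.natAbs := by omega
            rwa [he])
        refine ⟨w, ?_⟩
        rw [val_eq, hw]
        have hcast : ((q.num.toNat : ℚ)) = (q.num : ℚ) := by
          exact_mod_cast congrArg (fun z : ℤ => (z : ℚ)) (Int.toNat_of_nonneg hnum.le)
        simp only [hcast]
        exact q.num_div_den
  · constructor
    · intro w w' h
      simp only [val2_eq] at h
      have hcop : ∀ v : List Bool, Nat.Coprime ((g v).1 + (g v).2) (g v).1 := by
        intro v
        have h2 : Nat.Coprime ((g v).2 + (g v).1) (g v).1 :=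
          Nat.coprime_add_self_left.mpr (g_coprime v).symm
        simpa [Nat.add_comm] using h2
      obtain ⟨h1, h2⟩ := frac_inj (by have := g_pos w; omega) (g_pos w).1
        (by have := g_pos w'; omega) (g_pos w').1 (hcop w) (hcop w') h
      have hg : g w = g w' := Prod.ext h2 (by omega)
      exact g_inj w w' hg
    · ext q
      simp only [Set.mem_range, Set.mem_setOf_eq]
      constructor
      · rintro ⟨w, rfl⟩
        rw [val2_eq]
        have hp := g_pos w
        rw [one_lt_div (by exact_mod_cast hp.1 : (0:ℚ) < ((g w).1 : ℚ))]
        exact_mod_cast (by omega : (g w).1 < (g w).1 + (g w).2)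
      · intro hq
        have hq0 : 0 < q := lt_trans one_pos hq
        have hnum : 0 < q.num := Rat.num_pos.mpr hq0
        have hgt : q.den < q.num.toNat := by
          have h1 : (q.den : ℚ) < (q.num : ℚ) := by
            rw [← Rat.num_div_den q, one_lt_div
              (by exact_mod_cast q.pos : (0:ℚ) < (q.den : ℚ))] at hq
            exact hq
          have h2 : (q.den : ℤ) < q.num := by exact_mod_cast h1
          omega
        have hcop : Nat.Coprime q.den (q.num.toNat - q.den) := by
          have hr : Nat.Coprime q.den q.num.toNat := by
            have h := q.reduced
            have he : q.num.toNat = q.num.natAbs := by omega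
            rw [he]
            exact h.symm
          have he : (q.num.toNat - q.den) + q.den = q.num.toNat := by omega
          exact Nat.coprime_add_self_right.mp (by rw [he]; exact hr)
        obtain ⟨w, hw⟩ := g_surj (q.den + (q.num.toNat - q.den)) q.den
          (q.num.toNat - q.den) rfl q.pos (by omega) hcop
        refine ⟨w, ?_⟩
        rw [val2_eq, hw]
        simp only
        have hsum : q.den + (q.num.toNat - q.den) = q.num.toNat := by omega
        rw [hsum]
        have hcast : ((q.num.toNat : ℚ)) = (q.num : ℚ) := by
          exact_mod_cast congrArg (fun z : ℤ => (z : ℚ)) (Int.toNat_of_nonneg hnum.le)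
        rw [hcast]
        exact q.num_div_den
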